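/- Let k be even, k≥6, m≥1. The set P = {{(i,2j),(i,2j+1)} : 0≤i≤2m+1, 0≤j≤(k/2)−1} is a perfect matching of H_{k,m,c} (in its Klein bottle coordinates), and the contraction H_{k,m,c}/P is isomorphic to K^0_{2m+2,k/2}. -/

import Mathlib

open SimpleGraph

namespace HexPaper

/-- Vertices live in `ℕ × ℕ`. -/
abbrev V2 : Type := ℕ × ℕ

/-- Edge set of the `p × q` grid: `(i,j) ~ (i',j')` iff `|i-i'| + |j-j'| = 1`. -/
def gridE (p q : ℕ) : Set (Sym2 V2) :=
  {e | ∃ a b : V2, a.1 < p ∧ a.2 < q ∧ b.1 < p ∧ b.2 < q ∧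
    ((a.1 = b.1 ∧ b.2 = a.2 + 1) ∨ (a.2 = b.2 ∧ b.1 = a.1 + 1)) ∧ e = s(a, b)}

/-- Vertex set of the `p × q` grid. -/
def gridV (p q : ℕ) : Set V2 := {v | v.1 < p ∧ v.2 < q}

/-- Edge set of the cylinder grid `p × q`: the grid plus the wrap-around edges. -/
def cylGridE (p q : ℕ) : Set (Sym2 V2) :=
  gridE p q ∪ {e | ∃ j, j < p ∧ e = s(((j, 0) : V2), (j, q - 1))}

/-- Edge set of the hexagonal cylinder of length `k` and breadth `m`. -/
def hexCylE (k m : ℕ) : Set (Sym2 V2) :=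
  cylGridE (m + 1) (2 * k) \
    {e | ∃ i j, i ≤ (m - 1) / 2 ∧ j < k ∧
      (e = s(((2 * i, 2 * j) : V2), (2 * i + 1, 2 * j)) ∨
       e = s(((2 * i + 1, 2 * j + 1) : V2), (2 * i + 2, 2 * j + 1)))}

/-- Vertex set of the hexagonal cylinder of length `k` and breadth `m`. -/
def cylV (k m : ℕ) : Set V2 := gridV (m + 1) (2 * k)

/-- The degree-two vertices `z_j` of the hexagonal cylinder. -/
def zC (j : ℕ) : V2 := (0, 2 * j)

/-- The degree-two vertices `x_j` of the hexagonal cylinder of breadth `m`. -/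
def xC (m j : ℕ) : V2 := if m % 2 = 1 then (m, 2 * j) else (m, 2 * j + 1)

/-- Edge set of `H_{k,m,r}`. -/
def HrE (k m r : ℕ) : Set (Sym2 V2) :=
  hexCylE k m ∪ {e | ∃ j, j < k ∧ e = s(zC j, xC m ((j + r) % k))}

/-- Edge set of `H_{k,m,a}`. -/
def HaE (k m : ℕ) : Set (Sym2 V2) :=
  hexCylE k m ∪ {s(zC 0, xC m 1), s(zC 1, xC m 0)} ∪
    {e | ∃ i, 2 ≤ i ∧ i < k ∧ e = s(zC i, xC m ((k + 1 - i) % k))}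

/-- Edge set of `H_{k,m,b}`. -/
def HbE (k m : ℕ) : Set (Sym2 V2) :=
  hexCylE k m ∪ {s(zC 0, xC m 0)} ∪
    {e | ∃ i, 1 ≤ i ∧ i < k ∧ e = s(zC i, xC m ((k - i) % k))}

/-- Edge set of `H_{k,m,c}` (in its Klein-bottle coordinates on the `(2m+2) × k` grid). -/
def HcE (k m : ℕ) : Set (Sym2 V2) :=
  (gridE (2 * m + 2) k \
    {e | ∃ i j, i ≤ m ∧ j < k / 2 ∧
      (e = s(((2 * i, 2 * j + 1) : V2), (2 * i + 1, 2 * j + 1)) ∨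
       e = s(((2 * i + 1, 2 * j) : V2), (2 * i + 2, 2 * j)))}) ∪
  {e | ∃ i, i < k / 2 ∧ e = s(((0, 2 * i + 1) : V2), (2 * m + 1, 2 * i + 1))} ∪
  {e | ∃ i, i ≤ 2 * m + 1 ∧ e = s(((i, 0) : V2), (2 * m + 1 - i, k - 1))}

/-- Vertex set of `H_{k,m,c}`. -/
def HcV (k m : ℕ) : Set V2 := gridV (2 * m + 2) k

/-- Edge set of `H_{k,m,f}` (in its Klein-bottle coordinates on the `(2m+4) × k` grid). -/
def HfE (k m : ℕ) : Set (Sym2 V2) :=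
  (gridE (2 * m + 4) k \
    {e | ∃ i j, i ≤ m + 1 ∧ j < (k - 1) / 2 ∧
      (e = s(((2 * i, 2 * j + 1) : V2), (2 * i + 1, 2 * j + 1)) ∨
       e = s(((2 * i + 1, 2 * j) : V2), (2 * i + 2, 2 * j)))}) ∪
  {e | ∃ i, i < (k - 1) / 2 ∧ e = s(((0, 2 * i + 1) : V2), (2 * m + 3, 2 * i + 1))} ∪
  {s(((0, 0) : V2), ((0, k - 1) : V2))} ∪
  {e | ∃ i, 1 ≤ i ∧ i ≤ 2 * m + 3 ∧ e = s(((i, 0) : V2), (2 * m + 4 - i, k - 1))}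

/-- Vertex set of `H_{k,m,f}`. -/
def HfV (k m : ℕ) : Set V2 := gridV (2 * m + 4) k

/-- Vertex set of the hexagonal ladder of length `k` and breadth `m`:
the `(m+1) × (2k+m)` grid minus `{(j,i) : j ≤ m-2, i ≤ m-2-j}` and
`{(j,2k+i) : 2 ≤ j ≤ m, m+1-j ≤ i ≤ m-1}`. -/
def ladV (k m : ℕ) : Set V2 :=
  {v | v.1 ≤ m ∧ v.2 < 2 * k + m ∧
    ¬(v.1 + 2 ≤ m ∧ v.1 + v.2 + 2 ≤ m) ∧
    ¬(2 ≤ v.1 ∧ 2 * k ≤ v.2 ∧ m + 1 ≤ v.1 + (v.2 - 2 * k) ∧ v.2 - 2 * k + 1 ≤ m)}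

/-- Edge set of the hexagonal ladder of length `k` and breadth `m`. -/
def ladE (k m : ℕ) : Set (Sym2 V2) :=
  gridE (m + 1) (2 * k + m) \
    {e | ∃ i j, i < m ∧ j < k ∧ e = s(((i, m - i + 2 * j) : V2), (i + 1, m - i + 2 * j))}

/-- Vertex set of the twisted hexagonal cylinder `TC_{k,m,1}` (for `k ≤ m-2`). -/
def tc1V (k m : ℕ) : Set V2 := ladV k m ∪ {(0, 2 * k + m), (m - k - 1, 3 * k + 2)}

/-- Edge set of the twisted hexagonal cylinder `TC_{k,m,1}`. -/
def tc1E (k m : ℕ) : Set (Sym2 V2) :=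
  ladE k m ∪
  {s(((0, 2 * k + m) : V2), (0, 2 * k + m - 1)),
   s(((0, 2 * k + m) : V2), (k + 1, m - k - 2)),
   s(((m - k - 1, 3 * k + 2) : V2), (m - k - 1, 3 * k + 1)),
   s(((m - k - 1, 3 * k + 2) : V2), (m, 0))} ∪
  {e | ∃ j, 1 ≤ j ∧ j + k + 2 ≤ m ∧
    e = s(((j, 2 * k + m - j) : V2), (k + j + 1, m - k - j - 2))}

/-- The degree-two vertices `z_j` of `TC_{k,m,1}`, `0 ≤ j ≤ k`. -/
def z1 (k m j : ℕ) : V2 := (0, 2 * k + m - 2 * j)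

/-- The degree-two vertices `x_j` of `TC_{k,m,1}`, `0 ≤ j ≤ k`. -/
def x1 (m j : ℕ) : V2 := (j, m - (j + 1))

/-- The degree-two vertices `v_i` of `TC_{k,m,1}`, `0 ≤ i ≤ k`. -/
def v1 (k m i : ℕ) : V2 :=
  if i = 0 then (m - k - 1, 3 * k + 2) else (m - k + 1, 3 * k - (i - 1))

/-- The degree-two vertices `w_i` of `TC_{k,m,1}`, `0 ≤ i ≤ k`. -/
def w1 (k m i : ℕ) : V2 :=
  if i = 0 then (m, 2 * k) else (m, 2 * k - (2 * (i - 1) + 1))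

/-- Edge set of `H_{k,m,h}`. -/
def HhE (k m : ℕ) : Set (Sym2 V2) :=
  tc1E k m ∪ {e | ∃ i, i ≤ k ∧ e = s(z1 k m i, x1 m i)} ∪
    {e | ∃ i, i < k ∧ e = s(v1 k m i, w1 k m i)}

/-- Vertex set of the twisted hexagonal cylinder `TC_{k,m,2}` (for `k ≥ m+1`):
the hexagonal ladder of length `k` and breadth `m+1` minus the vertices
`(m+1,i)`, `0 ≤ i ≤ 2(k-m)-3` (no vertex deleted when `k = m+1`). -/
def tc2V (k m : ℕ) : Set V2 :=
  ladV k (m + 1) \ {v | v.1 = m + 1 ∧ m + 2 ≤ k ∧ v.2 + 3 ≤ 2 * (k - m)}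

/-- Edge set of the twisted hexagonal cylinder `TC_{k,m,2}`. -/
def tc2E (k m : ℕ) : Set (Sym2 V2) :=
  ladE k (m + 1) ∪ {s(((0, 2 * k + m) : V2), (m + 1, 2 * (k - m - 1)))} ∪
  {e | ∃ j, j + m + 2 ≤ k ∧
    e = s(((0, 2 * k + m - (2 * j + 1)) : V2), (m, 2 * (k - m - 1) - (2 * j + 2)))}

/-- The degree-two vertices `x_i` of `TC_{k,m,2}`, `0 ≤ i ≤ m`. -/
def x2 (m i : ℕ) : V2 := (m - i, i)

/-- The degree-two vertices `z_i` of `TC_{k,m,2}`, `0 ≤ i ≤ m`. -/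
def z2 (m i : ℕ) : V2 := (0, m + 2 * i + 1)

/-- The degree-two vertices `w_i` of `TC_{k,m,2}`, `0 ≤ i ≤ m`. -/
def w2 (k m i : ℕ) : V2 := (i + 1, 2 * k + m - i)

/-- The degree-two vertices `v_i` of `TC_{k,m,2}`, `0 ≤ i ≤ m`. -/
def v2 (k m i : ℕ) : V2 := (m + 1, 2 * k - (2 * i + 1))

/-- Edge set of `H_{k,m,g}`. -/
def HgE (k m : ℕ) : Set (Sym2 V2) :=
  tc2E k m ∪ {e | ∃ i, i ≤ m ∧ (e = s(z2 m i, w2 k m i) ∨ e = s(x2 m i, v2 k m i))}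

/-- The simple graph on the vertex set `Vs` whose edges are the members of `E`
joining two vertices of `Vs`. -/
def mkG (E : Set (Sym2 V2)) (Vs : Set V2) : SimpleGraph ↥Vs :=
  (SimpleGraph.fromEdgeSet E).induce Vs

/-- The hexagonal cylinder of length `k` and breadth `m`, as a graph. -/
def HexCylinder (k m : ℕ) : SimpleGraph ↥(cylV k m) := mkG (hexCylE k m) (cylV k m)

def Hr (k m r : ℕ) : SimpleGraph ↥(cylV k m) := mkG (HrE k m r) (cylV k m)
def Ha (k m : ℕ) : SimpleGraph ↥(cylV k m) := mkG (HaE k m) (cylV k m)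
def Hb (k m : ℕ) : SimpleGraph ↥(cylV k m) := mkG (HbE k m) (cylV k m)
def Hc (k m : ℕ) : SimpleGraph ↥(HcV k m) := mkG (HcE k m) (HcV k m)
def Hf (k m : ℕ) : SimpleGraph ↥(HfV k m) := mkG (HfE k m) (HfV k m)
def Ladder (k m : ℕ) : SimpleGraph ↥(ladV k m) := mkG (ladE k m) (ladV k m)
def TC1 (k m : ℕ) : SimpleGraph ↥(tc1V k m) := mkG (tc1E k m) (tc1V k m)
def TC2 (k m : ℕ) : SimpleGraph ↥(tc2V k m) := mkG (tc2E k m) (tc2V k m)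
def Hg (k m : ℕ) : SimpleGraph ↥(tc2V k m) := mkG (HgE k m) (tc2V k m)
def Hh (k m : ℕ) : SimpleGraph ↥(tc1V k m) := mkG (HhE k m) (tc1V k m)

/-- Edge set of the torus locally grid graph `T^δ_{p,q}`. -/
def TtE (p q δ : ℕ) : Set (Sym2 V2) :=
  gridE p q ∪ {e | ∃ i, i < p ∧ e = s(((i, 0) : V2), ((i + δ) % p, q - 1))} ∪
    {e | ∃ j, j < q ∧ e = s(((0, j) : V2), (p - 1, j))}

/-- Edge set of the Klein bottle locally grid graphs `K^0_{p,q}` (`p` even) and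
`K^1_{p,q}` (`p` odd). -/
def KflipE (p q : ℕ) : Set (Sym2 V2) :=
  gridE p q ∪ {e | ∃ j, j < p ∧ e = s(((j, 0) : V2), (p - j - 1, q - 1))} ∪
    {e | ∃ j, j < q ∧ e = s(((0, j) : V2), (p - 1, j))}

/-- Edge set of the Klein bottle locally grid graph `K^2_{p,q}` (`p` even). -/
def K2E (p q : ℕ) : Set (Sym2 V2) :=
  gridE p q ∪ {e | ∃ j, j < p ∧ e = s(((j, 0) : V2), ((p - j) % p, q - 1))} ∪
    {e | ∃ j, j < q ∧ e = s(((0, j) : V2), (p - 1, j))}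

/-- Edge set of the locally grid graph `S_{p,q}`. -/
def SE (p q : ℕ) : Set (Sym2 V2) :=
  if p ≤ q then
    gridE p q ∪ {e | ∃ j, j < p ∧ e = s(((j, 0) : V2), ((p - j) % p, q - p + j))} ∪
      {e | ∃ i, i < p ∧ e = s(((0, i) : V2), (i, q - 1))} ∪
      {e | ∃ i, p ≤ i ∧ i < q ∧ e = s(((0, i) : V2), (p - 1, i - p))}
  else
    gridE p q ∪ {e | ∃ j, j < q ∧ e = s(((j, 0) : V2), (0, q - 1 - j))} ∪
      {e | ∃ i, i < q ∧ e = s(((p - 1 - i, q - 1) : V2), (p - 1, i))} ∪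
      {e | ∃ i, i < p - q ∧ e = s(((i, q - 1) : V2), (i + q, 0))}

def Tt (p q δ : ℕ) : SimpleGraph ↥(gridV p q) := mkG (TtE p q δ) (gridV p q)
def Kflip (p q : ℕ) : SimpleGraph ↥(gridV p q) := mkG (KflipE p q) (gridV p q)
def K2 (p q : ℕ) : SimpleGraph ↥(gridV p q) := mkG (K2E p q) (gridV p q)
def Sg (p q : ℕ) : SimpleGraph ↥(gridV p q) := mkG (SE p q) (gridV p q)

/-- `s` is the vertex set of a cycle of length `n` in `G`. -/
def IsCycleSetN {V : Type} (G : SimpleGraph V) (n : ℕ) (s : Set V) : Prop :=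
  ∃ (u : V) (w : G.Walk u u), w.IsCycle ∧ w.length = n ∧ ∀ v, v ∈ w.support ↔ v ∈ s

/-- `C` is a collection of `6`-cycles of `G` such that every `2`-path of `G` is
contained in precisely one member of `C`. -/
def IsCellCollection {V : Type} (G : SimpleGraph V) (C : Set (Set V)) : Prop :=
  (∀ s ∈ C, IsCycleSetN G 6 s) ∧
    ∀ x y z : V, G.Adj x y → G.Adj y z → x ≠ z →
      ∃! s, s ∈ C ∧ x ∈ s ∧ y ∈ s ∧ z ∈ s

/-- `G` is a hexagonal tiling: connected, cubic, of girth 6, with a collection of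
6-cycles (cells) such that every 2-path lies in precisely one of them. -/
def IsHexagonalTiling {V : Type} (G : SimpleGraph V) : Prop :=
  G.Connected ∧ (∀ v, (G.neighborSet v).ncard = 3) ∧ G.girth = 6 ∧
    ∃ C : Set (Set V), IsCellCollection G C

/-- The dual of a (locally grid) graph `G`: vertices are the squares (4-cycles)
of `G`, two squares being adjacent iff they share an edge of `G`. -/
def dualG {V : Type} (G : SimpleGraph V) :
    SimpleGraph {s : Set V // IsCycleSetN G 4 s} :=
  SimpleGraph.fromRel fun s t =>
    ∃ x y : V, G.Adj x y ∧ x ∈ s.1 ∧ y ∈ s.1 ∧ x ∈ t.1 ∧ y ∈ t.1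

/-- The graph on the vertex set `Vs ⊆ ℕ × ℕ` (kept as a graph on `ℕ × ℕ`, all
other vertices being isolated) whose edges are the members of `E` joining two
vertices of `Vs`. -/
def ambientG (E : Set (Sym2 V2)) (Vs : Set V2) : SimpleGraph V2 :=
  SimpleGraph.fromEdgeSet {e | e ∈ E ∧ ∀ v ∈ e, v ∈ Vs}


private def toCoord : Sym2 V2 → V2 :=
  Sym2.lift ⟨fun a b => (min a.1 b.1, min a.2 b.2 / 2), fun a b => by
    simp [min_comm]⟩

private lemma toCoord_pair (i j : ℕ) :
    toCoord s(((i, 2 * j) : V2), (i, 2 * j + 1)) = (i, j) := by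
  simp only [toCoord, Sym2.lift_mk]
  rw [Prod.mk.injEq]
  constructor <;> omega

private lemma mem_HcV (k m x y : ℕ) (hx : x < 2 * m + 2) (hy : y < k) :
    ((x, y) : V2) ∈ HcV k m := ⟨hx, hy⟩

private lemma hc_to_kflip (k m q : ℕ) (hk : k = 2 * q) (hq : 3 ≤ q)
    (i j i' j' : ℕ) (hi : i ≤ 2 * m + 1) (hj : j < q) (hi' : i' ≤ 2 * m + 1) (hj' : j' < q)
    (a b : V2) (ha : a = (i, 2 * j) ∨ a = (i, 2 * j + 1))
    (hb : b = (i', 2 * j') ∨ b = (i', 2 * j' + 1))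
    (hne : ¬(i = i' ∧ j = j')) (hab : s(a, b) ∈ HcE k m) :
    s(((i, j) : V2), ((i', j') : V2)) ∈ KflipE (2 * m + 2) q := by
  obtain ⟨ca, hca, rfl⟩ : ∃ ca, (ca = 2 * j ∨ ca = 2 * j + 1) ∧ a = (i, ca) := by
    rcases ha with rfl | rfl
    · exact ⟨2 * j, Or.inl rfl, rfl⟩
    · exact ⟨2 * j + 1, Or.inr rfl, rfl⟩
  obtain ⟨cb, hcb, rfl⟩ : ∃ cb, (cb = 2 * j' ∨ cb = 2 * j' + 1) ∧ b = (i', cb) := by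
    rcases hb with rfl | rfl
    · exact ⟨2 * j', Or.inl rfl, rfl⟩
    · exact ⟨2 * j' + 1, Or.inr rfl, rfl⟩
  simp only [HcE, KflipE, gridE, Set.mem_union, Set.mem_diff, Set.mem_setOf_eq] at hab ⊢
  rcases hab with (⟨hg, -⟩ | ⟨t, ht, heq⟩) | ⟨t, ht, heq⟩
  · obtain ⟨A, B, hA1, hA2, hB1, hB2, hrel, heq⟩ := hg
    rw [Sym2.eq_iff] at heq
    have hcase : (i = i' ∧ j' = j + 1) ∨ (i = i' ∧ j = j' + 1) ∨
        (j = j' ∧ i' = i + 1) ∨ (j = j' ∧ i = i' + 1) := by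
      rcases heq with ⟨rfl, rfl⟩ | ⟨rfl, rfl⟩ <;> dsimp only at hrel <;> omega
    rcases hcase with ⟨rfl, rfl⟩ | ⟨rfl, rfl⟩ | ⟨rfl, rfl⟩ | ⟨rfl, rfl⟩
    · exact Or.inl (Or.inl ⟨(i, j), (i, j + 1), show i < 2 * m + 2 by omega,
        show j < q by omega, show i < 2 * m + 2 by omega, show j + 1 < q by omega,
        Or.inl ⟨rfl, rfl⟩, rfl⟩)
    · exact Or.inl (Or.inl ⟨(i, j'), (i, j' + 1), show i < 2 * m + 2 by omega,
        show j' < q by omega, show i < 2 * m + 2 by omega, show j' + 1 < q by omega,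
        Or.inl ⟨rfl, rfl⟩, Sym2.eq_swap⟩)
    · exact Or.inl (Or.inl ⟨(i, j), (i + 1, j), show i < 2 * m + 2 by omega,
        show j < q by omega, show i + 1 < 2 * m + 2 by omega, show j < q by omega,
        Or.inr ⟨rfl, rfl⟩, rfl⟩)
    · exact Or.inl (Or.inl ⟨(i', j), (i' + 1, j), show i' < 2 * m + 2 by omega,
        show j < q by omega, show i' + 1 < 2 * m + 2 by omega, show j < q by omega,
        Or.inr ⟨rfl, rfl⟩, Sym2.eq_swap⟩)
  · -- the edges s((0,2t+1),(2m+1,2t+1))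
    rw [Sym2.eq_iff] at heq
    simp only [Prod.mk.injEq] at heq
    rcases heq with ⟨⟨h1, h2⟩, h3, h4⟩ | ⟨⟨h1, h2⟩, h3, h4⟩
    · refine Or.inr ⟨j, by omega, ?_⟩
      have e3 : j' = j := by omega
      have e1 : i = 0 := by omega
      have e2 : i' = 2 * m + 2 - 1 := by omega
      subst e3; subst e1; subst e2; rfl
    · refine Or.inr ⟨j, by omega, ?_⟩
      have e3 : j' = j := by omega
      have e1 : i' = 0 := by omega
      have e2 : i = 2 * m + 2 - 1 := by omega
      subst e3; subst e1; subst e2; exact Sym2.eq_swap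
  · -- the edges s((t,0),(2m+1-t,k-1))
    rw [Sym2.eq_iff] at heq
    simp only [Prod.mk.injEq] at heq
    rcases heq with ⟨⟨h1, h2⟩, h3, h4⟩ | ⟨⟨h1, h2⟩, h3, h4⟩
    · refine Or.inl (Or.inr ⟨i, by omega, ?_⟩)
      have e3 : j = 0 := by omega
      have e4 : j' = q - 1 := by omega
      have e2 : i' = 2 * m + 2 - i - 1 := by omega
      subst e3; subst e4; subst e2; rfl
    · refine Or.inl (Or.inr ⟨i', by omega, ?_⟩)
      have e3 : j' = 0 := by omega
      have e4 : j = q - 1 := by omega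
      have e2 : i = 2 * m + 2 - i' - 1 := by omega
      subst e3; subst e4; subst e2; exact Sym2.eq_swap

private lemma kflip_to_hc (k m q : ℕ) (hk : k = 2 * q) (hq : 3 ≤ q)
    (i j i' j' : ℕ) (hi : i ≤ 2 * m + 1) (hj : j < q) (hi' : i' ≤ 2 * m + 1) (hj' : j' < q)
    (hab : s(((i, j) : V2), ((i', j') : V2)) ∈ KflipE (2 * m + 2) q) :
    ∃ a b : V2, (a = (i, 2 * j) ∨ a = (i, 2 * j + 1)) ∧
      (b = (i', 2 * j') ∨ b = (i', 2 * j' + 1)) ∧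
      s(a, b) ∈ HcE k m ∧ a ≠ b ∧ ∀ v ∈ (s(a, b) : Sym2 V2), v ∈ HcV k m := by
  have hnr : ∀ x y c : ℕ, c % 2 = x % 2 → y = x + 1 →
      s(((x, c) : V2), ((y, c) : V2)) ∉
        {e | ∃ i j, i ≤ m ∧ j < k / 2 ∧
          (e = s(((2 * i, 2 * j + 1) : V2), (2 * i + 1, 2 * j + 1)) ∨
           e = s(((2 * i + 1, 2 * j) : V2), (2 * i + 2, 2 * j)))} := by
    rintro x y c hpar rfl ⟨t, sx, -, -, (hh | hh)⟩ <;>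
      (rw [Sym2.eq_iff] at hh; simp only [Prod.mk.injEq] at hh; omega)
  have hvert : ∀ x c : ℕ, x + 1 ≤ 2 * m + 1 → c < k → c % 2 = x % 2 →
      s(((x, c) : V2), ((x + 1, c) : V2)) ∈ HcE k m := by
    intro x c hx hc hpar
    exact Or.inl (Or.inl ⟨⟨(x, c), (x + 1, c), show x < 2 * m + 2 by omega, hc,
      show x + 1 < 2 * m + 2 by omega, hc, Or.inr ⟨rfl, rfl⟩, rfl⟩, hnr x (x + 1) c hpar rfl⟩)
  have hhor : ∀ x c : ℕ, x ≤ 2 * m + 1 → c + 1 < k →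
      s(((x, c) : V2), ((x, c + 1) : V2)) ∈ HcE k m := by
    intro x c hx hc
    refine Or.inl (Or.inl ⟨⟨(x, c), (x, c + 1), show x < 2 * m + 2 by omega,
      by omega, show x < 2 * m + 2 by omega, hc, Or.inl ⟨rfl, rfl⟩, rfl⟩, ?_⟩)
    rintro ⟨t, sx, -, -, (hh | hh)⟩ <;>
      (rw [Sym2.eq_iff] at hh; simp only [Prod.mk.injEq] at hh; omega)
  simp only [KflipE, gridE, Set.mem_union, Set.mem_setOf_eq] at hab
  rcases hab with (⟨A, B, hA1, hA2, hB1, hB2, hrel, heq⟩ | ⟨t, ht, heq⟩) | ⟨t, ht, heq⟩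
  · rw [Sym2.eq_iff] at heq
    have hcase : (i = i' ∧ j' = j + 1) ∨ (i = i' ∧ j = j' + 1) ∨
        (j = j' ∧ i' = i + 1) ∨ (j = j' ∧ i = i' + 1) := by
      rcases heq with ⟨rfl, rfl⟩ | ⟨rfl, rfl⟩ <;> dsimp only at hrel <;> omega
    rcases hcase with ⟨rfl, rfl⟩ | ⟨rfl, rfl⟩ | ⟨rfl, rfl⟩ | ⟨rfl, rfl⟩
    · refine ⟨(i, 2 * j + 1), (i, 2 * j + 2), Or.inr rfl,
        Or.inl (by rw [Prod.mk.injEq]; omega), hhor i (2 * j + 1) hi (by omega), ?_, ?_⟩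
      · rw [ne_eq, Prod.mk.injEq]; omega
      · rintro v hv; rw [Sym2.mem_iff] at hv
        rcases hv with rfl | rfl <;> exact mem_HcV k m _ _ (by omega) (by omega)
    · refine ⟨(i, 2 * j' + 2), (i, 2 * j' + 1),
        Or.inl (by rw [Prod.mk.injEq]; omega), Or.inr rfl, ?_, ?_, ?_⟩
      · rw [Sym2.eq_swap]; exact hhor i (2 * j' + 1) hi (by omega)
      · rw [ne_eq, Prod.mk.injEq]; omega
      · rintro v hv; rw [Sym2.mem_iff] at hv
        rcases hv with rfl | rfl <;> exact mem_HcV k m _ _ (by omega) (by omega)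
    · rcases Nat.even_or_odd i with ⟨t2, ht2⟩ | ⟨t2, ht2⟩
      · refine ⟨(i, 2 * j), (i + 1, 2 * j), Or.inl rfl, Or.inl rfl,
          hvert i (2 * j) (by omega) (by omega) (by omega), ?_, ?_⟩
        · rw [ne_eq, Prod.mk.injEq]; omega
        · rintro v hv; rw [Sym2.mem_iff] at hv
          rcases hv with rfl | rfl <;> exact mem_HcV k m _ _ (by omega) (by omega)
      · refine ⟨(i, 2 * j + 1), (i + 1, 2 * j + 1), Or.inr rfl, Or.inr rfl,
          hvert i (2 * j + 1) (by omega) (by omega) (by omega), ?_, ?_⟩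
        · rw [ne_eq, Prod.mk.injEq]; omega
        · rintro v hv; rw [Sym2.mem_iff] at hv
          rcases hv with rfl | rfl <;> exact mem_HcV k m _ _ (by omega) (by omega)
    · rcases Nat.even_or_odd i' with ⟨t2, ht2⟩ | ⟨t2, ht2⟩
      · refine ⟨(i' + 1, 2 * j), (i', 2 * j), Or.inl rfl, Or.inl rfl, ?_, ?_, ?_⟩
        · rw [Sym2.eq_swap]; exact hvert i' (2 * j) (by omega) (by omega) (by omega)
        · rw [ne_eq, Prod.mk.injEq]; omega
        · rintro v hv; rw [Sym2.mem_iff] at hv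
          rcases hv with rfl | rfl <;> exact mem_HcV k m _ _ (by omega) (by omega)
      · refine ⟨(i' + 1, 2 * j + 1), (i', 2 * j + 1), Or.inr rfl, Or.inr rfl, ?_, ?_, ?_⟩
        · rw [Sym2.eq_swap]; exact hvert i' (2 * j + 1) (by omega) (by omega) (by omega)
        · rw [ne_eq, Prod.mk.injEq]; omega
        · rintro v hv; rw [Sym2.mem_iff] at hv
          rcases hv with rfl | rfl <;> exact mem_HcV k m _ _ (by omega) (by omega)
  · -- wrap 1 : s((t,0),(p-t-1,q-1))
    rw [Sym2.eq_iff] at heq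
    simp only [Prod.mk.injEq] at heq
    rcases heq with ⟨⟨h1, h2⟩, h3, h4⟩ | ⟨⟨h1, h2⟩, h3, h4⟩
    · refine ⟨(i, 0), (i', k - 1), Or.inl (by rw [Prod.mk.injEq]; omega),
        Or.inr (by rw [Prod.mk.injEq]; omega), ?_, ?_, ?_⟩
      · refine Or.inr ⟨i, by omega, ?_⟩
        rw [show 2 * m + 1 - i = i' by omega]
      · rw [ne_eq, Prod.mk.injEq]; omega
      · rintro v hv; rw [Sym2.mem_iff] at hv
        rcases hv with rfl | rfl <;> exact mem_HcV k m _ _ (by omega) (by omega)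
    · refine ⟨(i, k - 1), (i', 0), Or.inr (by rw [Prod.mk.injEq]; omega),
        Or.inl (by rw [Prod.mk.injEq]; omega), ?_, ?_, ?_⟩
      · refine Or.inr ⟨i', by omega, ?_⟩
        rw [show 2 * m + 1 - i' = i by omega]
        exact Sym2.eq_swap
      · rw [ne_eq, Prod.mk.injEq]; omega
      · rintro v hv; rw [Sym2.mem_iff] at hv
        rcases hv with rfl | rfl <;> exact mem_HcV k m _ _ (by omega) (by omega)
  · -- wrap 2 : s((0,t),(p-1,t))
    rw [Sym2.eq_iff] at heq
    simp only [Prod.mk.injEq] at heq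
    rcases heq with ⟨⟨h1, h2⟩, h3, h4⟩ | ⟨⟨h1, h2⟩, h3, h4⟩
    · refine ⟨(0, 2 * j + 1), (2 * m + 1, 2 * j + 1),
        Or.inr (by rw [Prod.mk.injEq]; omega), Or.inr (by rw [Prod.mk.injEq]; omega),
        Or.inl (Or.inr ⟨j, by omega, rfl⟩), ?_, ?_⟩
      · rw [ne_eq, Prod.mk.injEq]; omega
      · rintro v hv; rw [Sym2.mem_iff] at hv
        rcases hv with rfl | rfl <;> exact mem_HcV k m _ _ (by omega) (by omega)
    · refine ⟨(2 * m + 1, 2 * j + 1), (0, 2 * j + 1),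
        Or.inr (by rw [Prod.mk.injEq]; omega), Or.inr (by rw [Prod.mk.injEq]; omega),
        Or.inl (Or.inr ⟨j, by omega, Sym2.eq_swap⟩), ?_, ?_⟩
      · rw [ne_eq, Prod.mk.injEq]; omega
      · rintro v hv; rw [Sym2.mem_iff] at hv
        rcases hv with rfl | rfl <;> exact mem_HcV k m _ _ (by omega) (by omega)

/-- `P` is a perfect matching of the graph `G` with vertex set `Vs`: the members
of `P` are edges of `G` and every vertex of `Vs` lies in exactly one member of `P`. -/
def IsPerfectMatchingOn (G : SimpleGraph V2) (Vs : Set V2) (P : Set (Sym2 V2)) : Prop :=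
  P ⊆ G.edgeSet ∧ ∀ v ∈ Vs, ∃! e, e ∈ P ∧ v ∈ e

/-- The contraction `G/P` of a perfect matching `P` in `G`: the simple graph on the
edges of `P` where `e ≠ f` are adjacent iff some endpoint of `e` is adjacent in `G`
to some endpoint of `f` (parallel edges merged, loops discarded). -/
def contractPM (G : SimpleGraph V2) (P : Set (Sym2 V2)) : SimpleGraph ↥P :=
  SimpleGraph.fromRel fun e f =>
    ∃ a b : V2, a ∈ (e : Sym2 V2) ∧ b ∈ (f : Sym2 V2) ∧ G.Adj a b


/-- The perfect matching `P = {{(i,2j),(i,2j+1)} : 0 ≤ i ≤ 2m+1, 0 ≤ j ≤ k/2-1}`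
of `H_{k,m,c}` in its Klein bottle coordinates. -/
def PKlein (k m : ℕ) : Set (Sym2 V2) :=
  {e | ∃ i j, i ≤ 2 * m + 1 ∧ j < k / 2 ∧ e = s(((i, 2 * j) : V2), (i, 2 * j + 1))}


/-- `P` is a perfect matching of `H_{k,m,c}` and `H_{k,m,c}/P ≅ K^0_{2m+2,k/2}`. -/
theorem Hc_contract (k m : ℕ) (hke : Even k) (hk : 6 ≤ k) (hm : 1 ≤ m) :
    IsPerfectMatchingOn (ambientG (HcE k m) (HcV k m)) (HcV k m) (PKlein k m) ∧
    Nonempty (contractPM (ambientG (HcE k m) (HcV k m)) (PKlein k m) ≃g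
      Kflip (2 * m + 2) (k / 2)) := by
  obtain ⟨q, hqdef⟩ := hke
  have hk2 : k = 2 * q := by omega
  have hq3 : 3 ≤ q := by omega
  have hkq : k / 2 = q := by omega
  constructor
  · constructor
    · rintro e ⟨i, j, hi, hj, rfl⟩
      rw [hkq] at hj
      rw [ambientG, edgeSet_fromEdgeSet]
      refine ⟨⟨?_, ?_⟩, ?_⟩
      · refine Or.inl (Or.inl ⟨⟨(i, 2 * j), (i, 2 * j + 1), show i < 2 * m + 2 by omega,
          show 2 * j < k by omega, show i < 2 * m + 2 by omega,
          show 2 * j + 1 < k by omega, Or.inl ⟨rfl, rfl⟩, rfl⟩, ?_⟩)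
        rintro ⟨t, sx, -, -, (hh | hh)⟩ <;>
          (rw [Sym2.eq_iff] at hh; simp only [Prod.mk.injEq] at hh; omega)
      · rintro v hv; rw [Sym2.mem_iff] at hv
        rcases hv with rfl | rfl <;> exact mem_HcV k m _ _ (by omega) (by omega)
      · simp only [Sym2.mem_diagSet, Sym2.mk_isDiag_iff, Prod.mk.injEq]
        omega
    · rintro ⟨v1, v2⟩ hv
      obtain ⟨hv1, hv2⟩ := hv
      refine ⟨s(((v1, 2 * (v2 / 2)) : V2), (v1, 2 * (v2 / 2) + 1)),
        ⟨⟨v1, v2 / 2, by omega, by omega, rfl⟩, ?_⟩, ?_⟩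
      · rw [Sym2.mem_iff]
        rcases (by omega : v2 = 2 * (v2 / 2) ∨ v2 = 2 * (v2 / 2) + 1) with h | h
        · exact Or.inl (by rw [Prod.mk.injEq]; exact ⟨rfl, h⟩)
        · exact Or.inr (by rw [Prod.mk.injEq]; exact ⟨rfl, h⟩)
      · rintro e' ⟨⟨i, jj, hi, hjj, rfl⟩, hmem⟩
        rw [Sym2.mem_iff] at hmem
        rcases hmem with h | h <;> (rw [Prod.mk.injEq] at h; obtain ⟨rfl, h2⟩ := h) <;>
          rw [show 2 * (v2 / 2) = 2 * jj by omega]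
  · have kadj : ∀ u v : ↥(gridV (2 * m + 2) (k / 2)),
        (Kflip (2 * m + 2) (k / 2)).Adj u v ↔
          (s((u : V2), (v : V2)) ∈ KflipE (2 * m + 2) (k / 2) ∧ (u : V2) ≠ (v : V2)) :=
      fun u v => fromEdgeSet_adj _
    have hfwd : ∀ e : ↥(PKlein k m), toCoord e.1 ∈ gridV (2 * m + 2) (k / 2) := by
      rintro ⟨e, i, j, hi, hj, rfl⟩
      rw [toCoord_pair]
      exact ⟨by omega, hj⟩
    have hbwd : ∀ v : ↥(gridV (2 * m + 2) (k / 2)),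
        s((((v : V2).1, 2 * (v : V2).2) : V2), ((v : V2).1, 2 * (v : V2).2 + 1)) ∈
          PKlein k m := by
      rintro ⟨⟨x, y⟩, hx, hy⟩
      exact ⟨x, y, by omega, hy, rfl⟩
    refine ⟨⟨⟨fun e => ⟨toCoord e.1, hfwd e⟩,
      fun v => ⟨s((((v : V2).1, 2 * (v : V2).2) : V2), ((v : V2).1, 2 * (v : V2).2 + 1)),
        hbwd v⟩, ?_, ?_⟩, ?_⟩⟩
    · rintro ⟨e, he⟩
      obtain ⟨i, j, hi, hj, rfl⟩ := he
      apply Subtype.ext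
      dsimp only
      rw [toCoord_pair]
      try rfl
    · rintro ⟨⟨x, y⟩, hxy⟩
      apply Subtype.ext
      exact toCoord_pair x y
    · rintro ⟨e, he⟩ ⟨f, hf⟩
      obtain ⟨i, j, hi, hj, rfl⟩ := he
      obtain ⟨i', j', hi', hj', rfl⟩ := hf
      rw [kadj]
      show (s(toCoord s(((i, 2 * j) : V2), (i, 2 * j + 1)),
          toCoord s(((i', 2 * j') : V2), (i', 2 * j' + 1))) ∈ KflipE (2 * m + 2) (k / 2) ∧
          toCoord s(((i, 2 * j) : V2), (i, 2 * j + 1)) ≠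
            toCoord s(((i', 2 * j') : V2), (i', 2 * j' + 1))) ↔ _
      rw [toCoord_pair, toCoord_pair]
      rw [contractPM, fromRel_adj]
      constructor
      · rintro ⟨hmem, hne⟩
        have hne' : ¬(i = i' ∧ j = j') := by
          rintro ⟨rfl, rfl⟩; exact hne rfl
        obtain ⟨a, b, ha, hb, hHc, hab, hV⟩ :=
          kflip_to_hc k m (k / 2) (by omega) (by omega) i j i' j' hi hj hi' hj' hmem
        refine ⟨?_, Or.inl ⟨a, b, ?_, ?_, ?_⟩⟩
        · intro hsub
          have h2 := congrArg Subtype.val hsub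
          simp only [Sym2.eq_iff, Prod.mk.injEq] at h2
          omega
        · rw [Sym2.mem_iff]
          rcases ha with rfl | rfl
          · exact Or.inl rfl
          · exact Or.inr rfl
        · rw [Sym2.mem_iff]
          rcases hb with rfl | rfl
          · exact Or.inl rfl
          · exact Or.inr rfl
        · rw [ambientG, fromEdgeSet_adj]
          exact ⟨⟨hHc, hV⟩, hab⟩
      · rintro ⟨hnef, hr | hr⟩ <;> obtain ⟨a, b, hae, hbf, hGab⟩ := hr <;>
          rw [ambientG, fromEdgeSet_adj] at hGab <;>
          obtain ⟨⟨hHc, -⟩, hab⟩ := hGab <;>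
          rw [Sym2.mem_iff] at hae hbf <;>
          [skip; rw [show (s(((i, j) : V2), ((i', j') : V2)) : Sym2 V2) =
            s(((i', j') : V2), ((i, j) : V2)) from Sym2.eq_swap]]
        · refine ⟨hc_to_kflip k m (k / 2) (by omega) (by omega) i j i' j' hi hj hi' hj' a b hae hbf ?_ hHc, ?_⟩
          · rintro ⟨rfl, rfl⟩; exact hnef rfl
          · rw [ne_eq, Prod.mk.injEq]
            intro ⟨rfl, rfl⟩
            exact hnef rfl
        · refine ⟨hc_to_kflip k m (k / 2) (by omega) (by omega) i' j' i j hi' hj' hi hj a b hae hbf ?_ hHc, ?_⟩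
          · rintro ⟨rfl, rfl⟩; exact hnef rfl
          · rw [ne_eq, Prod.mk.injEq]
            intro ⟨rfl, rfl⟩
            exact hnef rfl

end HexPaper
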